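/- Let (X,d) be a pointed proper metric space, and let s : X → [0,∞) be an asymptotically Lipschitz function for which there exist constants c, b > 0 with s(x) ≥ c·|x| − b for all x ∈ X. Then for any function f : X → S^m (m ≥ 0) the following are equivalent: (a) the function f' : X → ℝ^{m+1}, f'(x) = |x|·f(x), is asymptotically Lipschitz; (b) the function F : X → ℝ^{m+1}, F(x) = s(x)·f(x), is asymptotically Lipschitz. -/

import Mathlib

/-- A function between metric spaces is *asymptotically Lipschitz* if it is
`(λ, M)`-asymptotically Lipschitz for some `λ, M ≥ 0`. -/
def AsympLip {X Y : Type*} [MetricSpace X] [MetricSpace Y] (f : X → Y) : Prop :=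
  ∃ lam M : ℝ, 0 ≤ lam ∧ 0 ≤ M ∧ ∀ x y, dist (f x) (f y) ≤ lam * dist x y + M

lemma aux_AL {X : Type*} [MetricSpace X] {E : Type*} [NormedAddCommGroup E]
    [NormedSpace ℝ E]
    (t1 t2 : X → ℝ) (h1 : ∀ x, 0 ≤ t1 x) (h2 : ∀ x, 0 ≤ t2 x)
    (hAL1 : AsympLip t1) (hAL2 : AsympLip t2)
    (A B : ℝ) (hA : 0 ≤ A) (hB : 0 ≤ B)
    (hcomp : ∀ x, t2 x ≤ A * t1 x + B)
    (f : X → E) (hf1 : ∀ x, ‖f x‖ = 1)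
    (hg1 : AsympLip (fun x => t1 x • f x)) :
    AsympLip (fun x => t2 x • f x) := by
  obtain ⟨l1, M1, hl1, hM1, h1'⟩ := hAL1
  obtain ⟨l2, M2, hl2, hM2, h2'⟩ := hAL2
  obtain ⟨lg, Mg, hlg, hMg, hg'⟩ := hg1
  refine ⟨l2 + A * (l1 + lg), M2 + A * (M1 + Mg) + 2 * B, by positivity, by positivity, ?_⟩
  intro x y
  have hd : (0:ℝ) ≤ dist x y := dist_nonneg
  have hN : (0:ℝ) ≤ ‖f x - f y‖ := norm_nonneg _
  have huv : ‖f x - f y‖ ≤ 2 := by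
    calc ‖f x - f y‖ ≤ ‖f x‖ + ‖f y‖ := norm_sub_le _ _
    _ = 2 := by rw [hf1, hf1]; norm_num
  have e1 : |t1 y - t1 x| ≤ l1 * dist x y + M1 := by
    have := h1' y x
    rwa [Real.dist_eq, dist_comm] at this
  have e2 : ‖t1 x • f x - t1 y • f y‖ ≤ lg * dist x y + Mg := by
    have := hg' x y
    rwa [dist_eq_norm] at this
  have key1 : t1 y * ‖f x - f y‖ ≤ (l1 + lg) * dist x y + (M1 + Mg) := by
    have heq : t1 y * ‖f x - f y‖ = ‖t1 y • (f x - f y)‖ := by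
      rw [norm_smul, Real.norm_eq_abs, abs_of_nonneg (h1 y)]
    have hsplit : t1 y • (f x - f y) = (t1 y - t1 x) • f x + (t1 x • f x - t1 y • f y) := by
      module
    rw [heq, hsplit]
    have := norm_add_le ((t1 y - t1 x) • f x) (t1 x • f x - t1 y • f y)
    have hn1 : ‖(t1 y - t1 x) • f x‖ = |t1 y - t1 x| := by
      rw [norm_smul, Real.norm_eq_abs, hf1, mul_one]
    rw [hn1] at this
    linarith
  have e3 : |t2 x - t2 y| ≤ l2 * dist x y + M2 := by
    have := h2' x y
    rwa [Real.dist_eq] at this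
  have hsplit2 : t2 x • f x - t2 y • f y = (t2 x - t2 y) • f x + t2 y • (f x - f y) := by
    module
  have htri : ‖t2 x • f x - t2 y • f y‖ ≤ |t2 x - t2 y| + t2 y * ‖f x - f y‖ := by
    rw [hsplit2]
    have := norm_add_le ((t2 x - t2 y) • f x) (t2 y • (f x - f y))
    have hn1 : ‖(t2 x - t2 y) • f x‖ = |t2 x - t2 y| := by
      rw [norm_smul, Real.norm_eq_abs, hf1, mul_one]
    have hn2 : ‖t2 y • (f x - f y)‖ ≤ t2 y * ‖f x - f y‖ := by
      rw [norm_smul, Real.norm_eq_abs, abs_of_nonneg (h2 y)]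
    linarith
  rw [show dist (t2 x • f x) (t2 y • f y) = ‖t2 x • f x - t2 y • f y‖ from dist_eq_norm _ _]
  have h3 : t2 y * ‖f x - f y‖ ≤ (A * t1 y + B) * ‖f x - f y‖ :=
    mul_le_mul_of_nonneg_right (hcomp y) hN
  nlinarith [mul_le_mul_of_nonneg_left key1 hA, mul_le_mul_of_nonneg_left huv hB]

/-- if `X` is a pointed proper metric space and `s : X → [0,∞)` is an
asymptotically Lipschitz function with `s(x) ≥ c·|x| − b` (`c, b > 0`), then for
`f : X → Sᵐ`, the map `f'(x) = |x|·f(x)` is asymptotically Lipschitz iff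
`F(x) = s(x)·f(x)` is asymptotically Lipschitz. -/
theorem stmt_13 {X : Type*} [MetricSpace X] [ProperSpace X] (x₀ : X) (m : ℕ)
    (s : X → ℝ) (hs0 : ∀ x, 0 ≤ s x) (hsAL : AsympLip s)
    (c b : ℝ) (hc : 0 < c) (hb : 0 < b)
    (hlow : ∀ x : X, c * dist x x₀ - b ≤ s x)
    (f : X → EuclideanSpace ℝ (Fin (m + 1))) (hf1 : ∀ x, ‖f x‖ = 1) :
    AsympLip (fun x : X => dist x x₀ • f x) ↔ AsympLip (fun x : X => s x • f x) := by
  have hnAL : AsympLip (fun x : X => dist x x₀) := by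
    refine ⟨1, 0, zero_le_one, le_rfl, fun x y => ?_⟩
    rw [Real.dist_eq, one_mul, add_zero]
    exact abs_dist_sub_le x y x₀
  obtain ⟨ls, Ms, hls, hMs, hs'⟩ := hsAL
  constructor
  · intro h
    refine aux_AL (fun x => dist x x₀) s (fun x => dist_nonneg) hs0 hnAL
      ⟨ls, Ms, hls, hMs, hs'⟩ ls (Ms + s x₀) hls (by have := hs0 x₀; linarith) (fun x => ?_) f hf1 h
    have hx := hs' x x₀
    rw [Real.dist_eq] at hx
    have := (abs_le.mp hx).2
    linarith
  · intro h
    refine aux_AL s (fun x => dist x x₀) hs0 (fun x => dist_nonneg)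
      ⟨ls, Ms, hls, hMs, hs'⟩ hnAL
      (1/c) (b/c) (by positivity) (by positivity) (fun x => ?_) f hf1 h
    have hx := hlow x
    show dist x x₀ ≤ 1 / c * s x + b / c
    rw [one_div, ← div_eq_inv_mul, ← add_div, le_div_iff₀ hc]
    nlinarith
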